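/- arXiv:1102.2689 — 5 statements merged into one kernel-verified Lean document; each statement's English description precedes it below -/
import Mathlib

section
/- Let v, w ∈ S_n. Then v ≤_L w if and only if for all (i,j) ∈ ninv(w) one has c_i(v) ≤ c_j(v) + m_{i,j}(w) (where c_{n+1}(v) = 0 by convention when j = n+1). -/
/-- The inversion set of `w`: pairs of positions `(i,j)` with `i < j` and `w i > w j`. -/
def Invs {n : ℕ} (w : Equiv.Perm (Fin n)) : Finset (Fin n × Fin n) :=
  Finset.univ.filter (fun p => p.1 < p.2 ∧ w p.2 < w p.1)

/-- The length (number of inversions) of `w`. -/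
def len {n : ℕ} (w : Equiv.Perm (Fin n)) : ℕ := (Invs w).card

/-- The `i`-th entry of the Lehmer code of `w`. -/
def lehmer {n : ℕ} (w : Equiv.Perm (Fin n)) (i : Fin n) : ℕ :=
  ((Invs w).filter (fun p => p.1 = i)).card

/-- The extended Lehmer code `m_{i,j}(w)`: the number of inversions `(i,k)` with `k < j`. -/
def mext {n : ℕ} (w : Equiv.Perm (Fin n)) (i : Fin n) (j : Fin (n + 1)) : ℕ :=
  ((Invs w).filter (fun p => p.1 = i ∧ (p.2 : ℕ) < (j : ℕ))).card

/-- The left weak order: `v ≤_L w` iff `inv(v) ⊆ inv(w)`. -/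
def leftWeak {n : ℕ} (v w : Equiv.Perm (Fin n)) : Prop := Invs v ⊆ Invs w

/-- The value of `w` extended to `Fin (n+1)` by fixing the last point
(the `1`-indexed convention `w(n+1) = n+1` becomes `wval w n = n` here). -/
def wval {n : ℕ} (w : Equiv.Perm (Fin n)) (j : Fin (n + 1)) : ℕ :=
  if h : (j : ℕ) < n then (w ⟨j, h⟩ : ℕ) else n

/-- The set of non-inversions of `w`: pairs `(i,j)` with `i ≤ j ≤ n+1` and `w i ≤ w j`,
where `w` is extended by fixing the last point. -/
def Ninvs {n : ℕ} (w : Equiv.Perm (Fin n)) : Finset (Fin n × Fin (n + 1)) :=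
  Finset.univ.filter (fun p => (p.1 : ℕ) ≤ (p.2 : ℕ) ∧ (w p.1 : ℕ) ≤ wval w p.2)

/-- The set of Lehmer codes of elements of the weak order interval `Λ_w = [id, w]`. -/
def codeSet {n : ℕ} (w : Equiv.Perm (Fin n)) : Set (Fin n → ℕ) :=
  {x | ∃ v : Equiv.Perm (Fin n), leftWeak v w ∧ lehmer v = x}

/-- The tuple `b_{i,x}(w)`: the `j`-th coordinate is `0` if `j < i` or `(i,j) ∈ inv(w)`,
and is `max {0, x - m_{i,j}(w)}` (truncated subtraction) if `j ≥ i` and `(i,j) ∈ ninv(w)`. -/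
def bmin {n : ℕ} (w : Equiv.Perm (Fin n)) (i : Fin n) (x : ℕ) : Fin n → ℕ :=
  fun j => if (i : ℕ) ≤ (j : ℕ) ∧ (w i : ℕ) ≤ (w j : ℕ) then x - mext w i j.castSucc else 0

/-- The set `M_w` of all `b_{i,x}(w)` for `1 ≤ x ≤ c_i(w)`. -/
def Mset {n : ℕ} (w : Equiv.Perm (Fin n)) : Set (Fin n → ℕ) :=
  {z | ∃ (i : Fin n) (x : ℕ), 1 ≤ x ∧ x ≤ lehmer w i ∧ z = bmin w i x}

/-- The direct sum `v × w ∈ S_{m+n}` of permutations. -/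
def dsum {m n : ℕ} (v : Equiv.Perm (Fin m)) (w : Equiv.Perm (Fin n)) :
    Equiv.Perm (Fin (m + n)) :=
  finSumFinEquiv.permCongr (Equiv.sumCongr v w)

/-- The Lehmer code of `v` extended by the convention `c_{n+1}(v) = 0`. -/
def lehmerExt {n : ℕ} (v : Equiv.Perm (Fin n)) (j : Fin (n + 1)) : ℕ :=
  if h : (j : ℕ) < n then lehmer v ⟨j, h⟩ else 0

lemma mem_Invs {n : ℕ} (w : Equiv.Perm (Fin n)) (p : Fin n × Fin n) :
    p ∈ Invs w ↔ p.1 < p.2 ∧ w p.2 < w p.1 := by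
  simp [Invs]

lemma lehmer_eq {n : ℕ} (v : Equiv.Perm (Fin n)) (i : Fin n) :
    lehmer v i = (Finset.univ.filter fun k => i < k ∧ v k < v i).card := by
  unfold lehmer Invs
  rw [Finset.filter_filter]
  refine Finset.card_bij' (fun p _ => p.2) (fun k _ => (i, k)) ?_ ?_ ?_ ?_
  · intro p hp
    rw [Finset.mem_filter] at hp
    rw [Finset.mem_filter]
    obtain ⟨_, ⟨h1, h2⟩, h3⟩ := hp
    subst h3
    exact ⟨Finset.mem_univ _, h1, h2⟩
  · intro k hk
    rw [Finset.mem_filter] at hk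
    rw [Finset.mem_filter]
    exact ⟨Finset.mem_univ _, ⟨hk.2.1, hk.2.2⟩, rfl⟩
  · intro p hp
    simp only [Finset.mem_filter, Finset.mem_univ, true_and] at hp
    exact Prod.ext hp.2.symm rfl
  · intro k _; rfl

lemma mext_eq {n : ℕ} (w : Equiv.Perm (Fin n)) (i : Fin n) (j : Fin (n + 1)) :
    mext w i j = (Finset.univ.filter fun k => i < k ∧ w k < w i ∧ (k : ℕ) < (j : ℕ)).card := by
  unfold mext Invs
  rw [Finset.filter_filter]
  refine Finset.card_bij' (fun p _ => p.2) (fun k _ => (i, k)) ?_ ?_ ?_ ?_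
  · intro p hp
    rw [Finset.mem_filter] at hp
    rw [Finset.mem_filter]
    obtain ⟨_, ⟨h1, h2⟩, h3, h4⟩ := hp
    subst h3
    exact ⟨Finset.mem_univ _, h1, h2, h4⟩
  · intro k hk
    rw [Finset.mem_filter] at hk
    rw [Finset.mem_filter]
    exact ⟨Finset.mem_univ _, ⟨hk.2.1, hk.2.2.1⟩, rfl, hk.2.2.2⟩
  · intro p hp
    simp only [Finset.mem_filter, Finset.mem_univ, true_and] at hp
    exact Prod.ext hp.2.1.symm rfl
  · intro k _; rfl

/-- Proposition 2.8: `v ≤_L w` iff for all `(i,j) ∈ ninv(w)` one has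
`c_i(v) ≤ c_j(v) + m_{i,j}(w)` (with `c_{n+1}(v) = 0` when `j = n+1`). -/
theorem weakEquivalence {n : ℕ} (v w : Equiv.Perm (Fin n)) :
    leftWeak v w ↔
      ∀ p : Fin n × Fin (n + 1), p ∈ Ninvs w →
        lehmer v p.1 ≤ lehmerExt v p.2 + mext w p.1 p.2 := by
  constructor
  · -- forward direction
    intro h p hp
    obtain ⟨i, j⟩ := p
    show lehmer v i ≤ lehmerExt v j + mext w i j
    simp only [Ninvs, Finset.mem_filter, Finset.mem_univ, true_and] at hp
    obtain ⟨hij, hw⟩ := hp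
    rcases eq_or_lt_of_le hij with heq | hlt
    · -- i = j as naturals
      have hjn : (j : ℕ) < n := heq ▸ i.isLt
      have : lehmerExt v j = lehmer v i := by
        simp only [lehmerExt, dif_pos hjn]
        congr 1
        exact Fin.ext heq.symm
      rw [this]
      exact Nat.le_add_right _ _
    · -- i < j
      rw [lehmer_eq]
      set S := Finset.univ.filter fun k : Fin n => i < k ∧ v k < v i with hS
      rw [← Finset.card_filter_add_card_filter_not (s := S) (fun k : Fin n => (k : ℕ) < (j : ℕ))]
      have h1 : (S.filter fun k : Fin n => (k : ℕ) < (j : ℕ)).card ≤ mext w i j := by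
        rw [mext_eq]
        apply Finset.card_le_card
        intro k hk
        simp only [hS, Finset.filter_filter, Finset.mem_filter, Finset.mem_univ, true_and] at hk ⊢
        obtain ⟨⟨h2, h3⟩, h4⟩ := hk
        refine ⟨h2, ?_, h4⟩
        have := h (mem_Invs v (i, k) |>.mpr ⟨h2, h3⟩)
        exact (mem_Invs w (i, k) |>.mp this).2
      have h2 : (S.filter fun k : Fin n => ¬ (k : ℕ) < (j : ℕ)).card ≤ lehmerExt v j := by
        by_cases hjn : (j : ℕ) < n
        · set j' : Fin n := ⟨j, hjn⟩ with hj'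
          have hwj : (w i : ℕ) ≤ (w j' : ℕ) := by
            simpa only [wval, dif_pos hjn] using hw
          have hjle : lehmerExt v j = lehmer v j' := by rw [lehmerExt, dif_pos hjn]
          rw [hjle, lehmer_eq]
          apply Finset.card_le_card
          intro k hk
          simp only [hS, Finset.filter_filter, Finset.mem_filter, Finset.mem_univ,
            true_and, not_lt] at hk ⊢
          obtain ⟨⟨h2, h3⟩, h4⟩ := hk
          have hwk : w k < w i := by
            have := h (mem_Invs v (i, k) |>.mpr ⟨h2, h3⟩)
            exact (mem_Invs w (i, k) |>.mp this).2
          have hkj : j' < k := by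
            rcases lt_or_eq_of_le h4 with h5 | h5
            · exact Fin.mk_lt_of_lt_val h5
            · exfalso
              have hkj' : k = j' := Fin.ext h5.symm
              rw [hkj'] at hwk
              have := Fin.lt_def.mp hwk
              omega
          refine ⟨hkj, ?_⟩
          by_contra hvk
          push_neg at hvk
          have hne : v j' ≠ v k := fun he => (ne_of_lt hkj) (v.injective he)
          have hvj : v j' < v i := lt_of_le_of_lt (lt_of_le_of_ne hvk hne).le h3
          have hij' : i < j' := Fin.lt_def.mpr hlt
          have h6 := h (mem_Invs v (i, j') |>.mpr ⟨hij', hvj⟩)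
          have h7 : w j' < w i := (mem_Invs w (i, j') |>.mp h6).2
          have h8 := Fin.lt_def.mp h7
          omega
        · have : (S.filter fun k : Fin n => ¬ (k : ℕ) < (j : ℕ)) = ∅ := by
            apply Finset.eq_empty_of_forall_notMem
            intro k hk
            simp only [hS, Finset.filter_filter, Finset.mem_filter, Finset.mem_univ,
              true_and, not_lt] at hk
            have := k.isLt
            omega
          rw [this]
          simp
      omega
  · -- backward direction
    intro H
    by_contra hsub
    rw [leftWeak, Finset.not_subset] at hsub
    have hne : ((Invs v).filter fun p => p ∉ Invs w).Nonempty := by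
      obtain ⟨p, hp1, hp2⟩ := hsub
      exact ⟨p, Finset.mem_filter.mpr ⟨hp1, hp2⟩⟩
    obtain ⟨⟨a, b⟩, hmem, hmax⟩ :=
      Finset.exists_max_image _ (fun p : Fin n × Fin n => (p.1 : ℕ)) hne
    rw [Finset.mem_filter, mem_Invs] at hmem
    obtain ⟨⟨hab, hvba⟩, hnw⟩ := hmem
    rw [mem_Invs] at hnw
    simp only [not_and, not_lt] at hnw
    have hwab : w a < w b := by
      have h1 := hnw hab
      have h2 : w a ≠ w b := fun he => (ne_of_lt hab) (w.injective he)
      exact lt_of_le_of_ne h1 h2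
    have hq : (a, b.castSucc) ∈ Ninvs w := by
      simp only [Ninvs, Finset.mem_filter, Finset.mem_univ, true_and, Fin.coe_castSucc]
      refine ⟨le_of_lt hab, ?_⟩
      have hbn : ((b.castSucc : Fin (n+1)) : ℕ) < n := by
        simp [b.isLt]
      rw [wval, dif_pos hbn]
      have : (⟨((b.castSucc : Fin (n+1)) : ℕ), hbn⟩ : Fin n) = b := by
        apply Fin.ext; simp
      rw [this]
      exact le_of_lt hwab
    have hlehExt : lehmerExt v b.castSucc = lehmer v b := by
      have hbn : ((b.castSucc : Fin (n+1)) : ℕ) < n := by simp [b.isLt]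
      rw [lehmerExt, dif_pos hbn]
      congr 1
    have Hq : lehmer v a ≤ lehmer v b + mext w a b.castSucc := by
      simpa [hlehExt] using H (a, b.castSucc) hq
    -- now derive a contradiction by counting
    set A := Finset.univ.filter (fun k : Fin n => a < k ∧ v k < v a ∧ (k : ℕ) < (b : ℕ)) with hA
    set B := Finset.univ.filter (fun k : Fin n => b < k ∧ v k < v b) with hB
    set S := Finset.univ.filter (fun k : Fin n => a < k ∧ v k < v a) with hSS
    have hWsub : (Finset.univ.filter fun k : Fin n =>
        a < k ∧ w k < w a ∧ (k : ℕ) < ((b.castSucc : Fin (n+1)) : ℕ)) ⊆ A := by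
      intro k hk
      simp only [hA, Finset.mem_filter, Finset.mem_univ, true_and, Fin.coe_castSucc] at hk ⊢
      obtain ⟨h1, h2, h3⟩ := hk
      refine ⟨h1, ?_, h3⟩
      by_contra hvk
      push_neg at hvk
      have hkb : k < b := Fin.lt_def.mpr h3
      have hvbk : v b < v k := lt_of_lt_of_le hvba hvk
      have hmem' : (k, b) ∈ (Invs v).filter fun p => p ∉ Invs w := by
        rw [Finset.mem_filter, mem_Invs, mem_Invs]
        refine ⟨⟨hkb, hvbk⟩, ?_⟩
        simp only [not_and, not_lt]
        intro _
        exact le_of_lt (lt_trans h2 hwab)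
      have h9 : (k : ℕ) ≤ (a : ℕ) := hmax (k, b) hmem'
      have h10 := Fin.lt_def.mp h1
      omega
    have hBsub : B ⊆ S := by
      intro k hk
      simp only [hB, hSS, Finset.mem_filter, Finset.mem_univ, true_and] at hk ⊢
      exact ⟨lt_trans hab hk.1, lt_trans hk.2 hvba⟩
    have hAsub : A ⊆ S := by
      intro k hk
      simp only [hA, hSS, Finset.mem_filter, Finset.mem_univ, true_and] at hk ⊢
      exact ⟨hk.1, hk.2.1⟩
    have hbS : b ∈ S := by
      simp only [hSS, Finset.mem_filter, Finset.mem_univ, true_and]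
      exact ⟨hab, hvba⟩
    have hdisj : Disjoint A B := by
      rw [Finset.disjoint_left]
      intro k hkA hkB
      simp only [hA, Finset.mem_filter, Finset.mem_univ, true_and] at hkA
      simp only [hB, Finset.mem_filter, Finset.mem_univ, true_and] at hkB
      have := Fin.lt_def.mp hkB.1
      omega
    have hbAB : b ∉ A ∪ B := by
      rw [Finset.mem_union]
      rintro (hb | hb)
      · simp only [hA, Finset.mem_filter, Finset.mem_univ, true_and] at hb
        exact absurd hb.2.2 (lt_irrefl _)
      · simp only [hB, Finset.mem_filter, Finset.mem_univ, true_and] at hb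
        exact absurd hb.1 (lt_irrefl b)
    have hins : insert b (A ∪ B) ⊆ S := by
      rw [Finset.insert_subset_iff]
      exact ⟨hbS, Finset.union_subset hAsub hBsub⟩
    have hcard : A.card + B.card + 1 ≤ S.card := by
      calc A.card + B.card + 1 = (insert b (A ∪ B)).card := by
            rw [Finset.card_insert_of_notMem hbAB, Finset.card_union_of_disjoint hdisj]
        _ ≤ S.card := Finset.card_le_card hins
    have hS_eq : S.card = lehmer v a := (lehmer_eq v a).symm
    have hB_eq : B.card = lehmer v b := (lehmer_eq v b).symm
    have hm : mext w a b.castSucc ≤ A.card := by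
      rw [mext_eq]
      exact Finset.card_le_card hWsub
    omega
end

section
/- Let w ∈ S_n and let u_1, u_2 ∈ S_n with u_1 ≤_L w and u_2 ≤_L w. Then there exists v ∈ S_n with v ≤_L w whose Lehmer code is the coordinatewise maximum: c(v) = c(u_1) ∨ c(u_2). That is, the set c(Λ_w) ⊆ ℕ^n is closed under the coordinatewise join of ℕ^n. -/
namespace CodeJoinAux

open Finset

variable {n : ℕ}

/-- Positions `l > i` with `v l < v i`. -/
def LS (v : Equiv.Perm (Fin n)) (i : Fin n) : Finset (Fin n) :=
  univ.filter fun l => i < l ∧ v l < v i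

/-- Positions `l` with `i < l < j` and `v l < v i`. -/
def MS (v : Equiv.Perm (Fin n)) (i : Fin n) (j : Fin (n + 1)) : Finset (Fin n) :=
  univ.filter fun l => i < l ∧ (l : ℕ) < (j : ℕ) ∧ v l < v i

/-- `x̂_j`: extend a tuple by `0` at the last place. -/
def xhat (x : Fin n → ℕ) (j : Fin (n + 1)) : ℕ :=
  if h : (j : ℕ) < n then x ⟨j, h⟩ else 0

/-- The ★ condition characterizing codes of elements of `Λ_w`. -/
def StarC (w : Equiv.Perm (Fin n)) (x : Fin n → ℕ) : Prop :=
  ∀ (i : Fin n) (j : Fin (n + 1)), (i : ℕ) ≤ (j : ℕ) → (w i : ℕ) ≤ wval w j →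
    x i ≤ mext w i j + xhat x j

lemma mem_Invs {v : Equiv.Perm (Fin n)} {a b : Fin n} :
    (a, b) ∈ Invs v ↔ a < b ∧ v b < v a := by
  simp [Invs]

lemma lehmer_eq (v : Equiv.Perm (Fin n)) (i : Fin n) : lehmer v i = (LS v i).card := by
  have h : LS v i = ((Invs v).filter (fun p => p.1 = i)).image Prod.snd := by
    ext l
    simp only [LS, MS, Invs, mem_filter, mem_univ, true_and, mem_image, Prod.exists]
    constructor
    · rintro ⟨h1, h2⟩; exact ⟨i, l, ⟨⟨h1, h2⟩, rfl⟩, rfl⟩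
    · rintro ⟨a, b, ⟨⟨h1, h2⟩, h3⟩, h4⟩; subst h3; subst h4; exact ⟨h1, h2⟩
  rw [h, Finset.card_image_of_injOn]
  · rfl
  rintro ⟨a, b⟩ ha ⟨c, d⟩ hc h
  simp only [mem_coe, mem_filter] at ha hc
  simp only [Prod.snd] at h
  simp [ha.2, hc.2, h]

lemma mext_eq (v : Equiv.Perm (Fin n)) (i : Fin n) (j : Fin (n + 1)) :
    mext v i j = (MS v i j).card := by
  have h : MS v i j = ((Invs v).filter (fun p => p.1 = i ∧ (p.2 : ℕ) < (j : ℕ))).image Prod.snd := by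
    ext l
    simp only [MS, Invs, mem_filter, mem_univ, true_and, mem_image, Prod.exists]
    constructor
    · rintro ⟨h1, h2, h3⟩; exact ⟨i, l, ⟨⟨h1, h3⟩, rfl, h2⟩, rfl⟩
    · rintro ⟨a, b, ⟨⟨h1, h2⟩, h3, h4⟩, h5⟩; subst h3; subst h5; exact ⟨h1, h4, h2⟩
  rw [h, Finset.card_image_of_injOn]
  · rfl
  rintro ⟨a, b⟩ ha ⟨c, d⟩ hc h
  simp only [mem_coe, mem_filter] at ha hc
  simp only [Prod.snd] at h
  simp [ha.2.1, hc.2.1, h]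

lemma lehmer_staircase (v : Equiv.Perm (Fin n)) (i : Fin n) :
    lehmer v i + (i : ℕ) + 1 ≤ n := by
  have h : LS v i ⊆ Finset.Ioi i := by
    intro l hl
    simp only [LS, mem_filter, mem_univ, true_and] at hl
    simpa using hl.1
  have hc := Finset.card_le_card h
  rw [Fin.card_Ioi] at hc
  rw [lehmer_eq]
  have := i.isLt
  omega

lemma wval_castSucc (w : Equiv.Perm (Fin n)) (q : Fin n) : wval w q.castSucc = (w q : ℕ) := by
  have hq : ((q.castSucc : Fin (n + 1)) : ℕ) < n := by simp [q.isLt]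
  rw [wval, dif_pos hq]
  congr 1

lemma xhat_castSucc (x : Fin n → ℕ) (q : Fin n) : xhat x q.castSucc = x q := by
  have hq : ((q.castSucc : Fin (n + 1)) : ℕ) < n := by simp [q.isLt]
  rw [xhat, dif_pos hq]
  congr 1

lemma star_forward {v w : Equiv.Perm (Fin n)} (h : leftWeak v w) : StarC w (lehmer v) := by
  classical
  intro i j hij hwij
  rw [lehmer_eq]
  rw [← Finset.card_filter_add_card_filter_not (s := LS v i)
    (p := fun l : Fin n => (l : ℕ) < (j : ℕ))]
  have h1 : ((LS v i).filter (fun l : Fin n => (l : ℕ) < (j : ℕ))).card ≤ mext w i j := by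
    rw [mext_eq]
    apply Finset.card_le_card
    intro l hl
    simp only [LS, MS, mem_filter, mem_univ, true_and] at hl ⊢
    obtain ⟨⟨hil, hvl⟩, hlj⟩ := hl
    have hw : (i, l) ∈ Invs w := h (mem_Invs.mpr ⟨hil, hvl⟩)
    exact ⟨hil, hlj, (mem_Invs.mp hw).2⟩
  have h2 : ((LS v i).filter (fun l : Fin n => ¬ (l : ℕ) < (j : ℕ))).card ≤ xhat (lehmer v) j := by
    by_cases hn : (j : ℕ) < n
    · set j' : Fin n := ⟨(j : ℕ), hn⟩ with hj'
      have hx : xhat (lehmer v) j = lehmer v j' := dif_pos hn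
      rw [hx, lehmer_eq]
      apply Finset.card_le_card
      intro l hl
      simp only [LS, mem_filter, mem_univ, true_and] at hl ⊢
      obtain ⟨⟨hil, hvl⟩, hlj⟩ := hl
      have hlj' : (j' : ℕ) ≤ (l : ℕ) := by simpa [hj'] using hlj
      -- establish i = j' or v i < v j'
      rcases eq_or_lt_of_le (show i ≤ j' from by
        rw [Fin.le_def]; simpa [hj'] using hij) with hcase | hcase
      · subst hcase
        exact ⟨hil, hvl⟩
      · have hwj : (w i : ℕ) ≤ (w j' : ℕ) := by
          have : wval w j = (w j' : ℕ) := dif_pos hn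
          omega
        have hnot : (i, j') ∉ Invs v := by
          intro hc
          have := (mem_Invs.mp (h hc)).2
          rw [Fin.lt_def] at this
          omega
        have hvij : v i < v j' := by
          rw [mem_Invs] at hnot
          push_neg at hnot
          have := hnot hcase
          rcases lt_or_eq_of_le this with h' | h'
          · exact h'
          · exact absurd (v.injective h') (by
              intro hcc
              exact absurd hcc (ne_of_lt hcase))
        have hlne : l ≠ j' := by
          intro hc
          subst hc
          exact absurd (hvl.trans hvij) (lt_irrefl _)
        constructor
        · rw [Fin.lt_def]
          rcases lt_or_eq_of_le hlj' with h' | h'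
          · exact h'
          · exact absurd (Fin.ext h'.symm : l = j') hlne
        · exact hvl.trans hvij
    · have : (LS v i).filter (fun l : Fin n => ¬ (l : ℕ) < (j : ℕ)) = ∅ := by
        apply Finset.filter_false_of_mem
        intro l _
        simp only [not_not]
        omega
      rw [this, Finset.card_empty]
      exact Nat.zero_le _
  omega

lemma star_backward {w v : Equiv.Perm (Fin n)} {x : Fin n → ℕ} (hs : StarC w x)
    (hc : lehmer v = x) : leftWeak v w := by
  classical
  by_contra hcon
  rw [leftWeak, Finset.not_subset] at hcon
  set B : Finset (Fin n × Fin n) := (Invs v).filter (fun p => p ∉ Invs w) with hB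
  have hBne : B.Nonempty := by
    obtain ⟨p, hp, hpw⟩ := hcon
    exact ⟨p, by simp [hB, hp, hpw]⟩
  obtain ⟨⟨k, q⟩, hkq, hmax⟩ := B.exists_max_image (fun p => (p.1 : ℕ)) hBne
  simp only [hB, mem_filter] at hkq
  obtain ⟨hkqv, hkqw⟩ := hkq
  rw [mem_Invs] at hkqv
  obtain ⟨hklt, hvqk⟩ := hkqv
  have hkqne : w k ≠ w q := fun hh => (ne_of_lt hklt) (w.injective hh)
  have hwkq : w k < w q := by
    rw [mem_Invs] at hkqw
    push_neg at hkqw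
    exact lt_of_le_of_ne (hkqw hklt) hkqne
  -- the Star inequality at (k, q)
  have hstar := hs k q.castSucc (by simp only [Fin.coe_castSucc]; exact le_of_lt (Fin.lt_def.mp hklt))
    (by rw [wval_castSucc]; exact le_of_lt hwkq)
  rw [xhat_castSucc] at hstar
  -- lower bound on lehmer v k
  have hlower : mext v k q.castSucc + lehmer v q + 1 ≤ lehmer v k := by
    rw [lehmer_eq, mext_eq, lehmer_eq]
    have hq1 : q ∉ MS v k q.castSucc := by simp [MS]
    have hq2 : q ∉ LS v q := by simp [LS]
    have hd : Disjoint (MS v k q.castSucc) (LS v q) := by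
      rw [Finset.disjoint_left]
      intro l hl1 hl2
      simp only [MS, LS, mem_filter, mem_univ, true_and] at hl1 hl2
      have := hl1.2.1
      have := hl2.1
      rw [Fin.lt_def] at this
      simp only [Fin.coe_castSucc] at *
      omega
    have hsub : insert q (MS v k q.castSucc ∪ LS v q) ⊆ LS v k := by
      intro l hl
      rcases Finset.mem_insert.mp hl with hl | hl
      · subst hl
        simp only [LS, mem_filter, mem_univ, true_and]
        exact ⟨hklt, hvqk⟩
      · rcases Finset.mem_union.mp hl with hl | hl
        · simp only [MS, mem_filter, mem_univ, true_and] at hl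
          simp only [LS, mem_filter, mem_univ, true_and]
          exact ⟨hl.1, hl.2.2⟩
        · simp only [LS, mem_filter, mem_univ, true_and] at hl ⊢
          exact ⟨hklt.trans hl.1, hl.2.trans hvqk⟩
    have hcard := Finset.card_le_card hsub
    rw [Finset.card_insert_of_notMem (by simp [hq1, hq2]),
      Finset.card_union_of_disjoint hd] at hcard
    omega
  rw [hc] at hlower
  -- so mext v < mext w, giving a witness l
  have hmlt : mext v k q.castSucc < mext w k q.castSucc := by omega
  have hnsub : ¬ (MS w k q.castSucc ⊆ MS v k q.castSucc) := by
    intro hsub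
    exact absurd (Finset.card_le_card hsub) (by rw [← mext_eq, ← mext_eq]; omega)
  rw [Finset.not_subset] at hnsub
  obtain ⟨l, hlw, hlv⟩ := hnsub
  simp only [MS, mem_filter, mem_univ, true_and] at hlw hlv
  obtain ⟨hkl, hlq, hwlk⟩ := hlw
  have hvkl : v k < v l := by
    push_neg at hlv
    have := hlv hkl hlq
    exact lt_of_le_of_ne this (fun hh => (ne_of_lt hkl) (v.injective hh))
  have hlqlt : l < q := by
    rw [Fin.lt_def]
    simpa using hlq
  have hmem : (l, q) ∈ B := by
    simp only [hB, mem_filter, mem_Invs]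
    refine ⟨⟨hlqlt, hvqk.trans hvkl⟩, ?_⟩
    rintro ⟨-, hh⟩
    rw [Fin.lt_def] at hh hwlk hwkq
    omega
  have := hmax (l, q) hmem
  simp only at this
  rw [Fin.lt_def] at hkl
  omega

lemma lehmer_one (i : Fin n) : lehmer (1 : Equiv.Perm (Fin n)) i = 0 := by
  rw [lehmer_eq]
  convert Finset.card_empty
  rw [Finset.eq_empty_iff_forall_notMem]
  intro l hl
  simp only [LS, mem_filter, mem_univ, true_and, Equiv.Perm.one_apply] at hl
  exact absurd ((Finset.mem_filter.mp hl).2.1.trans (Finset.mem_filter.mp hl).2.2) (lt_irrefl _)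

lemma lehmer_pos {v : Equiv.Perm (Fin n)} {r i : Fin n} (h : r < i) (hv : v i < v r) :
    1 ≤ lehmer v r := by
  rw [lehmer_eq, Nat.one_le_iff_ne_zero, ← Nat.pos_iff_ne_zero, Finset.card_pos]
  exact ⟨i, by simp [LS, h, hv]⟩

lemma lehmer_top {v : Equiv.Perm (Fin n)} {i : Fin n} (h : (v i : ℕ) = n - 1) :
    lehmer v i = n - 1 - (i : ℕ) := by
  rw [lehmer_eq]
  have hLS : LS v i = Finset.Ioi i := by
    ext l
    simp only [LS, mem_filter, mem_univ, true_and, Finset.mem_Ioi]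
    refine ⟨fun hl => hl.1, fun hl => ⟨hl, ?_⟩⟩
    have hne : v l ≠ v i := fun hh => (ne_of_lt hl).symm (v.injective hh)
    rw [Fin.lt_def]
    have := (v l).isLt
    have hne' : (v l : ℕ) ≠ (v i : ℕ) := fun hh => hne (Fin.ext hh)
    omega
  rw [hLS, Fin.card_Ioi]

lemma invs_swap {v : Equiv.Perm (Fin n)} {i r : Fin n} (hir : i < r)
    (hadj : (v r : ℕ) = (v i : ℕ) + 1) :
    Invs (Equiv.swap (v i) (v r) * v) = insert (i, r) (Invs v) := by
  classical
  set u := Equiv.swap (v i) (v r) * v with hu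
  have hinj : ∀ s t : Fin n, (v s : ℕ) = (v t : ℕ) → s = t :=
    fun s t hh => v.injective (Fin.ext hh)
  have hval : ∀ s : Fin n, (u s : ℕ) =
      if s = i then (v i : ℕ) + 1 else if s = r then (v i : ℕ) else (v s : ℕ) := by
    intro s
    rw [hu]
    simp only [Equiv.Perm.mul_apply]
    rcases eq_or_ne s i with rfl | h
    · rw [Equiv.swap_apply_left, if_pos rfl, hadj]
    · rcases eq_or_ne s r with rfl | h2
      · rw [Equiv.swap_apply_right, if_neg h, if_pos rfl]
      · rw [Equiv.swap_apply_of_ne_of_ne (fun hc => h (v.injective hc))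
          (fun hc => h2 (v.injective hc)), if_neg h, if_neg h2]
  have Eiff : ∀ a b : Fin n, ((a : ℕ) = (b : ℕ)) ↔ ((v a : ℕ) = (v b : ℕ)) := by
    intro a b
    constructor
    · intro h; rw [show a = b from Fin.ext h]
    · intro h; rw [show a = b from v.injective (Fin.ext h)]
  have hirn : (i : ℕ) < (r : ℕ) := hir
  ext ⟨s, t⟩
  simp only [mem_Invs, Finset.mem_insert, Prod.mk.injEq, Fin.lt_def, Fin.ext_iff]
  have hs1 : (s : ℕ) = (i : ℕ) → (u s : ℕ) = (v i : ℕ) + 1 := by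
    intro h; rw [hval s, if_pos (Fin.ext h)]
  have hs2 : (s : ℕ) ≠ (i : ℕ) → (s : ℕ) = (r : ℕ) → (u s : ℕ) = (v i : ℕ) := by
    intro h1 h2
    rw [hval s, if_neg (fun hc => h1 (by rw [hc])), if_pos (Fin.ext h2)]
  have hs3 : (s : ℕ) ≠ (i : ℕ) → (s : ℕ) ≠ (r : ℕ) → (u s : ℕ) = (v s : ℕ) := by
    intro h1 h2
    rw [hval s, if_neg (fun hc => h1 (by rw [hc])), if_neg (fun hc => h2 (by rw [hc]))]
  have ht1 : (t : ℕ) = (i : ℕ) → (u t : ℕ) = (v i : ℕ) + 1 := by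
    intro h; rw [hval t, if_pos (Fin.ext h)]
  have ht2 : (t : ℕ) ≠ (i : ℕ) → (t : ℕ) = (r : ℕ) → (u t : ℕ) = (v i : ℕ) := by
    intro h1 h2
    rw [hval t, if_neg (fun hc => h1 (by rw [hc])), if_pos (Fin.ext h2)]
  have ht3 : (t : ℕ) ≠ (i : ℕ) → (t : ℕ) ≠ (r : ℕ) → (u t : ℕ) = (v t : ℕ) := by
    intro h1 h2
    rw [hval t, if_neg (fun hc => h1 (by rw [hc])), if_neg (fun hc => h2 (by rw [hc]))]
  have e1 := Eiff s i
  have e2 := Eiff s r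
  have e3 := Eiff t i
  have e4 := Eiff t r
  have e5 := Eiff s t
  omega


lemma lehmer_insert {u v : Equiv.Perm (Fin n)} {i r : Fin n}
    (h : Invs u = insert (i, r) (Invs v)) (hnot : (i, r) ∉ Invs v) (k : Fin n) :
    lehmer u k = if i = k then lehmer v k + 1 else lehmer v k := by
  unfold lehmer
  rw [h, Finset.filter_insert]
  split_ifs with h1
  · rw [Finset.card_insert_of_notMem (fun hc => hnot (Finset.mem_filter.mp hc).1)]
  · rfl

lemma exists_code : ∀ (s : ℕ) (x : Fin n → ℕ), (∑ i, x i) = s →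
    (∀ i : Fin n, x i + (i : ℕ) + 1 ≤ n) → ∃ v : Equiv.Perm (Fin n), lehmer v = x := by
  intro s
  induction s using Nat.strong_induction_on with
  | _ s ih =>
    intro x hsum hx
    by_cases h0 : ∀ i, x i = 0
    · exact ⟨1, funext fun i => by rw [lehmer_one, h0]⟩
    · push_neg at h0
      classical
      set S : Finset (Fin n) := univ.filter (fun i => x i ≠ 0) with hS
      have hSne : S.Nonempty := by
        obtain ⟨i, hi⟩ := h0
        exact ⟨i, by simp [hS, hi]⟩
      set i := S.min' hSne with hi
      have hxi : x i ≠ 0 := by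
        have h' := S.min'_mem hSne
        rw [← hi] at h'
        rw [hS, Finset.mem_filter] at h'
        exact h'.2
      have hmin : ∀ k, k < i → x k = 0 := by
        intro k hk
        by_contra hc
        have hkS : k ∈ S := by simp [hS, hc]
        exact absurd (S.min'_le k hkS) (by rw [← hi]; exact not_le_of_gt hk)
      set x' := Function.update x i (x i - 1) with hx'
      have hsum' : (∑ j, x' j) = s - 1 := by
        rw [hx', Finset.sum_update_of_mem (Finset.mem_univ i)]
        have h2 : ∑ j, x j = x i + ∑ j ∈ univ \ {i}, x j :=
          (Finset.add_sum_erase _ x (Finset.mem_univ i)).symm.trans (by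
            rw [Finset.sdiff_singleton_eq_erase])
        omega
      have hs1 : 1 ≤ s := by
        have : x i ≤ ∑ j, x j := Finset.single_le_sum (fun j _ => Nat.zero_le (x j))
          (Finset.mem_univ i)
        omega
      obtain ⟨v', hv'⟩ := ih (s - 1) (by omega) x' hsum'
        (by
          intro k
          rcases eq_or_ne k i with rfl | hk
          · rw [hx', Function.update_self]
            have := hx i
            omega
          · rw [hx', Function.update_of_ne hk]
            exact hx k)
      by_cases htop : (v' i : ℕ) = n - 1
      · exfalso
        have h1 := lehmer_top htop
        rw [hv', hx', Function.update_self] at h1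
        have h2 := hx i
        have h3 := i.isLt
        omega
      · have hblt : (v' i : ℕ) + 1 < n := by
          have := (v' i).isLt
          omega
        set b : Fin n := ⟨(v' i : ℕ) + 1, hblt⟩ with hb
        set r := v'.symm b with hr
        have hvr : v' r = b := v'.apply_symm_apply b
        have hri : r ≠ i := by
          intro hh
          rw [hh] at hvr
          have : (v' i : ℕ) = (b : ℕ) := by rw [hvr]
          rw [hb] at this
          simp at this
        rcases lt_or_gt_of_ne hri with hlt | hgt
        · exfalso
          have hvv : v' i < v' r := by
            rw [Fin.lt_def, hvr, hb]
            simp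
          have h1 := lehmer_pos hlt hvv
          rw [hv', hx', Function.update_of_ne hri, hmin r hlt] at h1
          omega
        · refine ⟨Equiv.swap (v' i) (v' r) * v', ?_⟩
          have hadj : (v' r : ℕ) = (v' i : ℕ) + 1 := by rw [hvr]
          have hInv := invs_swap hgt hadj
          have hnot : (i, r) ∉ Invs v' := by
            rw [mem_Invs]
            rintro ⟨-, hh⟩
            rw [Fin.lt_def] at hh
            omega
          funext k
          rw [lehmer_insert hInv hnot k, hv']
          rcases eq_or_ne i k with rfl | hk
          · rw [if_pos rfl, hx', Function.update_self]
            omega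
          · rw [if_neg hk, hx', Function.update_of_ne (Ne.symm hk)]

end CodeJoinAux

/-- Lemma 3.1 (join half): if `u₁ ≤_L w` and `u₂ ≤_L w`, then there is `v ≤_L w` whose
Lehmer code is the coordinatewise maximum `c(u₁) ⊔ c(u₂)`; i.e. `c(Λ_w)` is closed under
the join of `ℕ^n`. -/
theorem codeSet_join_closed {n : ℕ} (w u₁ u₂ : Equiv.Perm (Fin n))
    (h₁ : leftWeak u₁ w) (h₂ : leftWeak u₂ w) :
    ∃ v : Equiv.Perm (Fin n), leftWeak v w ∧
      lehmer v = (fun i => max (lehmer u₁ i) (lehmer u₂ i)) := by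
  classical
  have hs1 := CodeJoinAux.star_forward h₁
  have hs2 := CodeJoinAux.star_forward h₂
  set x : Fin n → ℕ := fun i => max (lehmer u₁ i) (lehmer u₂ i) with hxdef
  have hs : CodeJoinAux.StarC w x := by
    intro i j hij hwij
    have e1 := hs1 i j hij hwij
    have e2 := hs2 i j hij hwij
    have m1 : CodeJoinAux.xhat (lehmer u₁) j ≤ CodeJoinAux.xhat x j := by
      unfold CodeJoinAux.xhat
      split
      · simp only [hxdef]
        exact le_max_left _ _
      · exact le_rfl
    have m2 : CodeJoinAux.xhat (lehmer u₂) j ≤ CodeJoinAux.xhat x j := by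
      unfold CodeJoinAux.xhat
      split
      · simp only [hxdef]
        exact le_max_right _ _
      · exact le_rfl
    have hxi : x i = max (lehmer u₁ i) (lehmer u₂ i) := by rw [hxdef]
    rw [hxi]
    exact max_le (e1.trans (Nat.add_le_add_left m1 _))
      (e2.trans (Nat.add_le_add_left m2 _))
  obtain ⟨v, hv⟩ := CodeJoinAux.exists_code (∑ i, x i) x rfl (by
    intro i
    have g1 := CodeJoinAux.lehmer_staircase u₁ i
    have g2 := CodeJoinAux.lehmer_staircase u₂ i
    have hxi : x i = max (lehmer u₁ i) (lehmer u₂ i) := by rw [hxdef]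
    omega)
  exact ⟨v, CodeJoinAux.star_backward hs hv, hv⟩
end

section
/- Let w ∈ S_n, let 1 ≤ i ≤ n, and let 1 ≤ x, y ≤ c_i(w). Then b_{i,x}(w) ≤ b_{i,y}(w) in the product order if and only if x ≤ y. In particular, each set C_i(w) = {b_{i,x}(w) : 1 ≤ x ≤ c_i(w)} is a chain under the product order. -/
lemma mext_self_zero {n : ℕ} (w : Equiv.Perm (Fin n)) (i : Fin n) :
    mext w i i.castSucc = 0 := by
  rw [mext, Finset.card_eq_zero, Finset.filter_eq_empty_iff]
  rintro ⟨a, b⟩ hab ⟨rfl, hb⟩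
  simp only [Invs, Finset.mem_filter, Fin.lt_def] at hab
  simp only [Fin.coe_castSucc] at hb
  omega

lemma bmin_self {n : ℕ} (w : Equiv.Perm (Fin n)) (i : Fin n) (x : ℕ) :
    bmin w i x i = x := by
  simp [bmin, mext_self_zero]

/-- Definition 4.8 / Lemma 4.9: for `1 ≤ x, y ≤ c_i(w)` one has
`b_{i,x}(w) ≤ b_{i,y}(w)` iff `x ≤ y`; in particular each
`C_i(w) = {b_{i,x}(w) : 1 ≤ x ≤ c_i(w)}` is a chain in the product order. -/
theorem bmin_chain {n : ℕ} (w : Equiv.Perm (Fin n)) (i : Fin n) :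
    (∀ x y : ℕ, 1 ≤ x → x ≤ lehmer w i → 1 ≤ y → y ≤ lehmer w i →
      (bmin w i x ≤ bmin w i y ↔ x ≤ y)) ∧
    IsChain (· ≤ ·)
      {z : Fin n → ℕ | ∃ x : ℕ, 1 ≤ x ∧ x ≤ lehmer w i ∧ z = bmin w i x} := by
  have key : ∀ x y : ℕ, bmin w i x ≤ bmin w i y ↔ x ≤ y := by
    intro x y
    constructor
    · intro h
      have := h i
      rwa [bmin_self, bmin_self] at this
    · intro h j
      simp only [bmin]
      split
      · omega
      · exact le_refl 0
  refine ⟨fun x y _ _ _ _ => key x y, ?_⟩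
  rintro z ⟨x, _, _, rfl⟩ z' ⟨y, _, _, rfl⟩ _
  rcases le_total x y with h | h
  · exact Or.inl ((key x y).mpr h)
  · exact Or.inr ((key y x).mpr h)
end

section
/- Let w ∈ S_n, let 1 ≤ i < j ≤ n, 1 ≤ x ≤ c_i(w), and 1 ≤ y ≤ c_j(w). Then b_{i,x}(w) is not ≤ b_{j,y}(w) in the product order. -/
/-- Lemma 4.10: if `i < j`, `1 ≤ x ≤ c_i(w)` and `1 ≤ y ≤ c_j(w)`, then
`b_{i,x}(w)` is not below `b_{j,y}(w)` in the product order. -/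
theorem bmin_not_le {n : ℕ} (w : Equiv.Perm (Fin n)) (i j : Fin n) (x y : ℕ)
    (hij : i < j) (hx1 : 1 ≤ x) (hx2 : x ≤ lehmer w i)
    (hy1 : 1 ≤ y) (hy2 : y ≤ lehmer w j) :
    ¬ bmin w i x ≤ bmin w j y := by
  have hm : mext w i i.castSucc = 0 := by
    unfold mext Invs
    rw [Finset.card_eq_zero, Finset.filter_filter, Finset.filter_eq_empty_iff]
    rintro p _ ⟨⟨hlt, _⟩, rfl, hlt2⟩
    simp only [Fin.coe_castSucc] at hlt2
    exact absurd hlt2 (Nat.not_lt.mpr (Nat.le_of_lt hlt))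
  intro h
  have hi := h i
  simp only [bmin, le_refl, and_self, if_true, hm, Nat.sub_zero,
    (Fin.lt_iff_val_lt_val.mp hij).not_ge, false_and, if_false] at hi
  omega
end

section
/- Let w ∈ S_n and suppose (i,j) ∈ inv(w). Then for all 1 ≤ x ≤ c_i(w) and 1 ≤ y ≤ c_j(w), the elements b_{i,x}(w) and b_{j,y}(w) are incomparable in the product order (neither is ≤ the other). -/
/-- Lemma 4.11: if `(i,j) ∈ inv(w)`, then for all `1 ≤ x ≤ c_i(w)` and `1 ≤ y ≤ c_j(w)`
the elements `b_{i,x}(w)` and `b_{j,y}(w)` are incomparable in the product order. -/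
theorem bmin_incomparable {n : ℕ} (w : Equiv.Perm (Fin n)) (i j : Fin n)
    (hinv : (i, j) ∈ Invs w) (x y : ℕ)
    (hx1 : 1 ≤ x) (hx2 : x ≤ lehmer w i) (hy1 : 1 ≤ y) (hy2 : y ≤ lehmer w j) :
    ¬ bmin w i x ≤ bmin w j y ∧ ¬ bmin w j y ≤ bmin w i x := by
  simp only [Invs, Finset.mem_filter, Finset.mem_univ, true_and] at hinv
  obtain ⟨hij, hw⟩ := hinv
  have hself : ∀ (k : Fin n) (z : ℕ), bmin w k z k = z := by
    intro k z
    have hm : mext w k k.castSucc = 0 := by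
      rw [mext, Invs, Finset.card_eq_zero, Finset.filter_filter]
      apply Finset.filter_false_of_mem
      intro p hp
      simp only [Finset.mem_univ] at hp
      rintro ⟨⟨h1, _⟩, rfl, h2⟩
      have := Fin.lt_iff_val_lt_val.mp h1
      simp only [Fin.coe_castSucc] at h2
      omega
    simp [bmin, hm]
  constructor
  · intro h
    have : bmin w i x i ≤ bmin w j y i := h i
    have hs := hself i x
    have hz : bmin w j y i = 0 := by
      simp [bmin, Nat.not_le_of_lt hij, Fin.lt_iff_val_lt_val.mp hij]
    rw [hz] at this
    omega
  · intro h
    have : bmin w j y j ≤ bmin w i x j := h j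
    have hs := hself j y
    have hz : bmin w i x j = 0 := by
      simp [bmin, Nat.not_le_of_lt hw, Fin.lt_iff_val_lt_val.mp hw]
    rw [hz] at this
    omega
end
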